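/- Let S̄ = (S_0,…,S_n) and T̄ = (T_0,…,T_n) be n-slices of the finite group G. Then the index [N_G(S̄) : S_0] divides the mark m(T̄,S̄) = |{gS_0 ∈ G/S_0 : g⁻¹T_ig ≤ S_i for all i}|. Moreover m(S̄,S̄) = [N_G(S̄) : S_0]. -/

import Mathlib

variable {G : Type*}

/-- The mark `m(K̄,S̄) = |{gS₀ ∈ G/S₀ : g⁻¹Kᵢg ≤ Sᵢ for all i}|`. -/
noncomputable def mark [Group G] {n : ℕ} (K S : Fin (n + 1) → Subgroup G) : ℕ :=
  Nat.card {x : G ⧸ S 0 //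
    ∃ g : G, QuotientGroup.mk g = x ∧ ∀ i, ∀ k ∈ K i, g⁻¹ * k * g ∈ S i}

/-- The normalizer `N_G(S̄) = ⋂ᵢ N_G(Sᵢ)` of a slice. -/
def sliceNormalizer [Group G] {n : ℕ} (S : Fin (n + 1) → Subgroup G) : Subgroup G :=
  ⨅ i, Subgroup.normalizer (S i : Set G)

/-- The index `[N_G(S̄) : S₀]`. -/
noncomputable def sliceIndex [Group G] {n : ℕ} (S : Fin (n + 1) → Subgroup G) : ℕ :=
  (S 0).relIndex (sliceNormalizer S)

/-- Counting a right-`H`-invariant subset of `G` by fibering over `G ⧸ H`. -/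
lemma card_invariant_eq [Group G] (H : Subgroup G) (P : G → Prop)
    (hP : ∀ g h, h ∈ H → P g → P (g * h)) :
    Nat.card {g : G // P g} =
      Nat.card H * Nat.card {x : G ⧸ H // ∃ g, QuotientGroup.mk g = x ∧ P g} := by
  classical
  let X := {x : G ⧸ H // ∃ g, QuotientGroup.mk g = x ∧ P g}
  let f : {g : G // P g} → X := fun g => ⟨QuotientGroup.mk g.1, g.1, rfl, g.2⟩
  have key : ∀ x : X, {p : {g : G // P g} // f p = x} ≃ H := by
    intro x
    let g₀ : G := x.2.choose
    have hg₀ : (QuotientGroup.mk g₀ : G ⧸ H) = x.1 := x.2.choose_spec.1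
    have hPg₀ : P g₀ := x.2.choose_spec.2
    refine
      { toFun := fun p => ⟨g₀⁻¹ * p.1.1, ?_⟩
        invFun := fun h => ⟨⟨g₀ * h.1, hP g₀ h.1 h.2 hPg₀⟩, ?_⟩
        left_inv := ?_
        right_inv := ?_ }
    · have : (QuotientGroup.mk g₀ : G ⧸ H) = QuotientGroup.mk p.1.1 := by
        rw [hg₀]
        exact (congrArg Subtype.val p.2).symm
      exact QuotientGroup.eq.mp this
    · apply Subtype.ext
      show (QuotientGroup.mk (g₀ * h.1) : G ⧸ H) = x.1
      rw [← hg₀]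
      exact QuotientGroup.mk_mul_of_mem g₀ h.2
    · intro p
      apply Subtype.ext; apply Subtype.ext
      show g₀ * (g₀⁻¹ * p.1.1) = p.1.1
      group
    · intro h
      apply Subtype.ext
      show g₀⁻¹ * (g₀ * h.1) = h.1
      group
  have e : {g : G // P g} ≃ X × H :=
    (Equiv.sigmaFiberEquiv f).symm.trans (Equiv.sigmaEquivProdOfEquiv key)
  rw [Nat.card_congr e, Nat.card_prod, Nat.mul_comm]

/-- `[N_G(S̄) : S₀]` divides the mark `m(T̄,S̄)`, and
`m(S̄,S̄) = [N_G(S̄) : S₀]`. -/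
theorem sliceIndex_dvd_mark {n : ℕ} [Group G] [Finite G]
    (S T : Fin (n + 1) → Subgroup G) (hS : Monotone S) (hT : Monotone T) :
    sliceIndex S ∣ mark T S ∧ mark S S = sliceIndex S := by
  classical
  set N := sliceNormalizer S with hN
  have hS0N : S 0 ≤ N := by
    refine le_iInf fun i => ?_
    exact (hS (Fin.zero_le i)).trans (Subgroup.le_normalizer)
  -- card N = card (S 0) * sliceIndex S
  have hcardN : Nat.card N = Nat.card (S 0) * sliceIndex S := by
    have h1 : ((S 0).subgroupOf N).index * Nat.card ((S 0).subgroupOf N) = Nat.card N :=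
      Subgroup.index_mul_card _
    have h2 : Nat.card ((S 0).subgroupOf N) = Nat.card (S 0) :=
      Nat.card_congr (Subgroup.subgroupOfEquivOfLe hS0N)
    rw [sliceIndex, Subgroup.relIndex, ← h1, h2, Nat.mul_comm]
  have hcard0 : Nat.card (S 0) ≠ 0 := Nat.card_pos.ne'
  -- the key membership fact for N
  have hmemN : ∀ g : G, g ∈ N ↔ ∀ i, g ∈ (Subgroup.normalizer (S i : Set G)) := by
    intro g; simp [hN, sliceNormalizer, Subgroup.mem_iInf]
  constructor
  · -- divisibility
    set P : G → Prop := fun g => ∀ i, ∀ k ∈ T i, g⁻¹ * k * g ∈ S i with hPdef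
    have hPS0 : ∀ g h, h ∈ S 0 → P g → P (g * h) := by
      intro g h hh hg i k hk
      have hhi : h ∈ S i := hS (Fin.zero_le i) hh
      have : (g * h)⁻¹ * k * (g * h) = h⁻¹ * (g⁻¹ * k * g) * h := by group
      rw [this]
      exact mul_mem (mul_mem (inv_mem hhi) (hg i k hk)) hhi
    have hPN : ∀ g h, h ∈ N → P g → P (g * h) := by
      intro g h hh hg i k hk
      have hhi : h ∈ (Subgroup.normalizer (S i : Set G)) := (hmemN h).mp hh i
      have : (g * h)⁻¹ * k * (g * h) = h⁻¹ * (g⁻¹ * k * g) * h := by group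
      rw [this]
      have := (Subgroup.mem_normalizer_iff.mp ((Subgroup.normalizer (S i : Set G)).inv_mem hhi) _).mp (hg i k hk)
      rwa [inv_inv] at this
    have c1 := card_invariant_eq (S 0) P hPS0
    have c2 := card_invariant_eq N P hPN
    have hmark : mark T S = Nat.card {x : G ⧸ S 0 // ∃ g, QuotientGroup.mk g = x ∧ P g} := rfl
    have : Nat.card (S 0) * sliceIndex S ∣ Nat.card (S 0) * mark T S := by
      rw [← hcardN, hmark, ← c1, c2]
      exact Dvd.intro _ rfl
    exact (Nat.mul_dvd_mul_iff_left (Nat.pos_of_ne_zero hcard0)).mp this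
  · -- equality: for T = S the set {g // P g} is exactly N
    set P : G → Prop := fun g => ∀ i, ∀ k ∈ S i, g⁻¹ * k * g ∈ S i with hPdef
    have hPiff : ∀ g, P g ↔ g ∈ N := by
      intro g
      constructor
      · intro hg
        rw [hmemN]
        intro i
        have := Subgroup.mem_normalizer_fintype (S := (S i : Set G)) (x := g⁻¹)
          (fun k hk => by simpa using hg i k hk)
        simpa using (Subgroup.normalizer (S i : Set G)).inv_mem this
      · intro hg i k hk
        have hgi : g ∈ (Subgroup.normalizer (S i : Set G)) := (hmemN g).mp hg i
        have := (Subgroup.mem_normalizer_iff.mp ((Subgroup.normalizer (S i : Set G)).inv_mem hgi) k).mp hk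
        rwa [inv_inv] at this
    have hPS0 : ∀ g h, h ∈ S 0 → P g → P (g * h) := by
      intro g h hh hg
      rw [hPiff] at hg ⊢
      exact mul_mem hg (hS0N hh)
    have c1 := card_invariant_eq (S 0) P hPS0
    have hYN : Nat.card {g : G // P g} = Nat.card N := by
      apply Nat.card_congr
      exact Equiv.subtypeEquivRight fun g => hPiff g
    have hmark : mark S S = Nat.card {x : G ⧸ S 0 // ∃ g, QuotientGroup.mk g = x ∧ P g} := rfl
    have : Nat.card (S 0) * mark S S = Nat.card (S 0) * sliceIndex S := by
      rw [← hcardN, ← hYN, c1, hmark]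
    exact Nat.eq_of_mul_eq_mul_left (Nat.pos_of_ne_zero hcard0) this
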